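/- arXiv:1307.6435 — 2 statements merged into one kernel-verified Lean document; each statement's English description precedes it below -/
import Mathlib

section
/- For each θ ∈ ℝ, with m(t) = ∑_{k=1}^{∞} k tᵏ/(1+tᵏ) and σ²(t) = ∑_{k=1}^{∞} k² tᵏ/(1+tᵏ)², one has lim_{t→1⁻} e^{−iθ m(t)/σ(t)} ∏_{k=1}^{∞} (1 + tᵏ e^{i k θ/σ(t)})/(1 + tᵏ) = e^{−θ²/2}. -/
open Filter Topology Real

/-- The mean `m(t) = ∑_{k≥1} k tᵏ/(1+tᵏ)` associated to `∏(1+zᵏ)`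
(the `k = 0` term vanishes). -/
noncomputable def meanQ (t : ℝ) : ℝ :=
  ∑' k : ℕ, (k : ℝ) * t ^ k / (1 + t ^ k)

/-- The standard deviation `σ(t)`, with `σ²(t) = ∑_{k≥1} k² tᵏ/(1+tᵏ)²`
(the `k = 0` term vanishes). -/
noncomputable def sigmaQ (t : ℝ) : ℝ :=
  Real.sqrt (∑' k : ℕ, (k : ℝ) ^ 2 * t ^ k / (1 + t ^ k) ^ 2)

/-- The characteristic function `φ_t` of the centered normalized variable `Z_t`:
`φ_t(θ) = e^{−iθm(t)/σ(t)} ∏_{k≥1} (1 + tᵏ e^{ikθ/σ(t)})/(1+tᵏ)`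
(the `k = 0` factor of the product equals `1`). -/
noncomputable def phiQ (t θ : ℝ) : ℂ :=
  Complex.exp (-Complex.I * (θ : ℂ) * ((meanQ t : ℝ) : ℂ) / ((sigmaQ t : ℝ) : ℂ)) *
    ∏' k : ℕ,
      (1 + (t : ℂ) ^ k * Complex.exp (Complex.I * (k : ℂ) * (θ : ℂ) / ((sigmaQ t : ℝ) : ℂ))) /
        (1 + (t : ℂ) ^ k)

lemma norm_cexp_mul_I_sub_one_le (y : ℝ) : ‖Complex.exp (y * Complex.I) - 1‖ ≤ |y| := by
  have h : Complex.exp (y * Complex.I) - 1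
      = ((Real.cos y - 1 : ℝ) : ℂ) + ((Real.sin y : ℝ) : ℂ) * Complex.I := by
    rw [Complex.exp_mul_I, ← Complex.ofReal_cos, ← Complex.ofReal_sin]
    push_cast
    ring
  rw [h, Complex.norm_add_mul_I]
  rw [show |y| = Real.sqrt (y^2) by rw [Real.sqrt_sq_eq_abs]]
  apply Real.sqrt_le_sqrt
  have h1 := Real.sin_sq_add_cos_sq y
  have h2 := Real.cos_sq (y/2)
  have h2' : 2 * (y/2) = y := by ring
  rw [h2'] at h2
  have h3 := Real.sin_sq_add_cos_sq (y/2)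
  have h4 : Real.sin (y/2)^2 ≤ (y/2)^2 := by
    have := Real.abs_sin_le_abs (x := y/2)
    nlinarith [abs_nonneg (y/2), abs_nonneg (Real.sin (y/2)), sq_abs (y/2), sq_abs (Real.sin (y/2))]
  nlinarith
lemma k_mul_pow_le {t : ℝ} (h0 : 0 < t) (h1 : t < 1) (k : ℕ) : (k:ℝ) * t^k ≤ 1/(1-t) := by
  have hlog : Real.log t⁻¹ ≤ t⁻¹ - 1 := Real.log_le_sub_one_of_pos (by positivity)
  set L : ℝ := -Real.log t with hL
  have hL1 : 1 - t ≤ L := by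
    have := Real.log_le_sub_one_of_pos h0
    linarith
  have hLpos : 0 < L := lt_of_lt_of_le (by linarith) hL1
  have key : (k:ℝ) * L ≤ (t^k)⁻¹ := by
    calc (k:ℝ) * L ≤ Real.exp ((k:ℝ) * L - 1) := by
          have := Real.add_one_le_exp ((k:ℝ) * L - 1); linarith
      _ ≤ Real.exp ((k:ℝ) * L) := Real.exp_le_exp.2 (by linarith)
      _ = (Real.exp L)^k := Real.exp_nat_mul L k
      _ = (t⁻¹)^k := by rw [hL, Real.exp_neg, Real.exp_log h0]
      _ = (t^k)⁻¹ := by rw [inv_pow]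
  have htk : 0 < t^k := pow_pos h0 k
  have h2 : (k:ℝ) * t^k ≤ 1/L := by
    rw [le_div_iff₀ hLpos]
    calc (k:ℝ) * t^k * L = ((k:ℝ) * L) * t^k := by ring
      _ ≤ (t^k)⁻¹ * t^k := by apply mul_le_mul_of_nonneg_right key htk.le
      _ = 1 := inv_mul_cancel₀ htk.ne'
  calc (k:ℝ) * t^k ≤ 1/L := h2
    _ ≤ 1/(1-t) := by
      apply one_div_le_one_div_of_le (by linarith) hL1
lemma sum_sq_lb (n : ℕ) : (n:ℝ)^3 ≤ 3 * ∑ k ∈ Finset.range (n+1), (k:ℝ)^2 := by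
  induction n with
  | zero => simp
  | succ n ih =>
    rw [Finset.sum_range_succ]
    push_cast
    push_cast at ih
    nlinarith [ih, Nat.cast_nonneg (α := ℝ) n]
lemma summable_pow_mul {t : ℝ} (h0 : 0 ≤ t) (h1 : t < 1) (j : ℕ) :
    Summable (fun k : ℕ => (k:ℝ)^j * t^k) := by
  have := summable_pow_mul_geometric_of_norm_lt_one (R := ℝ) j (r := t)
    (by rwa [Real.norm_eq_abs, abs_of_nonneg h0])
  exact this
lemma tsum_cube_le {t : ℝ} (h0 : 0 < t) (h1 : t < 1) :
    ∑' k:ℕ, (k:ℝ)^3 * t^k ≤ 256/(1-t)^4 := by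
  set s : ℝ := t ^ ((1:ℝ)/4) with hs
  have hs0 : 0 < s := Real.rpow_pos_of_pos h0 _
  have hs1 : s < 1 := Real.rpow_lt_one h0.le h1 (by norm_num)
  have hst : s^(4:ℕ) = t := by
    rw [hs, ← Real.rpow_natCast (t ^ ((1:ℝ)/4)) 4, ← Real.rpow_mul h0.le]
    norm_num
  have hpow : ∀ k : ℕ, t^k = (s^k)^3 * s^k := by
    intro k
    rw [← hst]; ring
  have hterm : ∀ k : ℕ, (k:ℝ)^3 * t^k ≤ (1/(1-s))^3 * s^k := by
    intro k
    rw [hpow k]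
    have h2 : (k:ℝ) * s^k ≤ 1/(1-s) := k_mul_pow_le hs0 hs1 k
    have h3 : ((k:ℝ) * s^k)^3 ≤ (1/(1-s))^3 := by
      apply pow_le_pow_left₀ (by positivity) h2
    calc (k:ℝ)^3 * ((s^k)^3 * s^k) = ((k:ℝ) * s^k)^3 * s^k := by ring
      _ ≤ (1/(1-s))^3 * s^k := by
          apply mul_le_mul_of_nonneg_right h3 (by positivity)
  have hsum1 : Summable (fun k : ℕ => (k:ℝ)^3 * t^k) := summable_pow_mul h0.le h1 3
  have hsum2 : Summable (fun k : ℕ => (1/(1-s))^3 * s^k) :=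
    (summable_geometric_of_lt_one hs0.le hs1).mul_left _
  calc ∑' k:ℕ, (k:ℝ)^3 * t^k ≤ ∑' k:ℕ, (1/(1-s))^3 * s^k := Summable.tsum_le_tsum hterm hsum1 hsum2
    _ = (1/(1-s))^3 * (1-s)⁻¹ := by
        rw [tsum_mul_left, tsum_geometric_of_lt_one hs0.le hs1]
    _ ≤ (4/(1-t))^3 * (4/(1-t)) := by
        have hle : 1 - t ≤ 4 * (1 - s) := by
          rw [← hst]
          nlinarith [hs0.le, hs1.le, sq_nonneg s, sq_nonneg (1-s)]
        have h1s : 0 < 1 - s := by linarith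
        have h1t : 0 < 1 - t := by linarith
        have hd : 1/(1-s) ≤ 4/(1-t) := by
          rw [div_le_div_iff₀ h1s h1t]; linarith
        have hd' : (1-s)⁻¹ ≤ 4/(1-t) := by rw [← one_div]; exact hd
        apply mul_le_mul _ hd' (by positivity) (by positivity)
        apply pow_le_pow_left₀ (by positivity) hd
    _ = 256/(1-t)^4 := by
        have h1t : (1:ℝ) - t ≠ 0 := by linarith
        field_simp
        ring
lemma S_lb {t : ℝ} (h0 : 1/2 ≤ t) (h1 : t < 1) :
    1/(12 * Real.exp 4 * (1-t)^3) ≤ ∑' k:ℕ, (k:ℝ)^2 * t^k/(1+t^k)^2 := by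
  have ht0 : 0 < t := by linarith
  have h1t : 0 < 1 - t := by linarith
  set N : ℕ := ⌈1/(1-t)⌉₊ with hN
  have hN1 : 1/(1-t) ≤ (N:ℝ) := Nat.le_ceil _
  have hN2 : (N:ℝ) ≤ 2/(1-t) := by
    have h2 : (N:ℝ) < 1/(1-t) + 1 := Nat.ceil_lt_add_one (by positivity)
    have h3 : (1:ℝ) ≤ 1/(1-t) := by
      rw [le_div_iff₀ h1t]; linarith
    have h4 : 2/(1-t) = 2*(1/(1-t)) := by ring
    rw [h4]; linarith
  -- t^k ≥ exp(-4) for k ≤ N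
  have hexp : ∀ k : ℕ, k ≤ N → Real.exp (-4) ≤ t^k := by
    intro k hk
    have h4 : Real.exp (-4) ≤ t^N := by
      have hlog : -(2*(1-t)) ≤ Real.log t := by
        have := Real.log_le_sub_one_of_pos (x := t⁻¹) (by positivity)
        rw [Real.log_inv] at this
        have h5 : t⁻¹ - 1 = (1-t)/t := by field_simp
        rw [h5] at this
        have h6 : (1-t)/t ≤ 2*(1-t) := by
          rw [div_le_iff₀ ht0]
          nlinarith
        linarith
      have h7 : (-4 : ℝ) ≤ (N:ℝ) * Real.log t := by
        have h8 : (N:ℝ) * (-(2*(1-t))) ≤ (N:ℝ) * Real.log t :=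
          mul_le_mul_of_nonneg_left hlog (by positivity)
        have h9 : (-4:ℝ) ≤ (N:ℝ) * (-(2*(1-t))) := by
          have h10 : (N:ℝ) * (2*(1-t)) ≤ (2/(1-t)) * (2*(1-t)) :=
            mul_le_mul_of_nonneg_right hN2 (by positivity)
          have h11 : (2/(1-t)) * (2*(1-t)) = 4 := by field_simp; ring
          nlinarith
        linarith
      calc Real.exp (-4) ≤ Real.exp ((N:ℝ) * Real.log t) := Real.exp_le_exp.2 h7
        _ = (Real.exp (Real.log t))^N := Real.exp_nat_mul _ N
        _ = t^N := by rw [Real.exp_log ht0]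
    calc Real.exp (-4) ≤ t^N := h4
      _ ≤ t^k := pow_le_pow_of_le_one ht0.le h1.le hk
  have hsummand : ∀ k : ℕ, (0:ℝ) ≤ (k:ℝ)^2 * t^k/(1+t^k)^2 := by
    intro k; positivity
  have hsum : Summable (fun k : ℕ => (k:ℝ)^2 * t^k/(1+t^k)^2) := by
    apply Summable.of_nonneg_of_le hsummand _ (summable_pow_mul ht0.le h1 2)
    intro k
    rw [div_le_iff₀ (by positivity)]
    have htk : (0:ℝ) ≤ t^k := by positivity
    nlinarith [sq_nonneg ((k:ℝ) * t^k), sq_nonneg (k:ℝ), sq_nonneg (t^k)]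
  have hfin : ∑ k ∈ Finset.range (N+1), (k:ℝ)^2 * t^k/(1+t^k)^2
      ≤ ∑' k:ℕ, (k:ℝ)^2 * t^k/(1+t^k)^2 :=
    Summable.sum_le_tsum _ (fun k _ => hsummand k) hsum
  have hterm : ∀ k ∈ Finset.range (N+1), (Real.exp (-4)/4) * (k:ℝ)^2 ≤ (k:ℝ)^2 * t^k/(1+t^k)^2 := by
    intro k hk
    rw [Finset.mem_range] at hk
    have h12 : Real.exp (-4) ≤ t^k := hexp k (by omega)
    have h13 : (1+t^k)^2 ≤ 4 := by
      have : t^k ≤ 1 := pow_le_one₀ ht0.le h1.le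
      nlinarith [pow_nonneg ht0.le k]
    rw [le_div_iff₀ (by positivity)]
    have hk2 : (0:ℝ) ≤ (k:ℝ)^2 := by positivity
    calc Real.exp (-4)/4 * (k:ℝ)^2 * (1+t^k)^2 ≤ Real.exp (-4)/4 * (k:ℝ)^2 * 4 := by
          apply mul_le_mul_of_nonneg_left h13 (by positivity)
      _ = (k:ℝ)^2 * Real.exp (-4) := by ring
      _ ≤ (k:ℝ)^2 * t^k := mul_le_mul_of_nonneg_left h12 hk2
  have hsum_lb : (Real.exp (-4)/4) * ∑ k ∈ Finset.range (N+1), (k:ℝ)^2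
      ≤ ∑ k ∈ Finset.range (N+1), (k:ℝ)^2 * t^k/(1+t^k)^2 := by
    rw [Finset.mul_sum]
    exact Finset.sum_le_sum hterm
  have hNcube : 1/(1-t)^3 ≤ (N:ℝ)^3 := by
    have : (0:ℝ) ≤ 1/(1-t) := by positivity
    calc 1/(1-t)^3 = (1/(1-t))^3 := by rw [div_pow]; norm_num
      _ ≤ (N:ℝ)^3 := pow_le_pow_left₀ this hN1 3
  have hfinal : 1/(12 * Real.exp 4 * (1-t)^3)
      ≤ (Real.exp (-4)/4) * ∑ k ∈ Finset.range (N+1), (k:ℝ)^2 := by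
    have h14 := sum_sq_lb N
    have hE : Real.exp (-4) = (Real.exp 4)⁻¹ := by
      rw [Real.exp_neg]
    have hE4 : 0 < Real.exp 4 := Real.exp_pos 4
    rw [hE]
    have h15 : 1/(1-t)^3 ≤ 3 * ∑ k ∈ Finset.range (N+1), (k:ℝ)^2 := le_trans hNcube h14
    calc 1/(12 * Real.exp 4 * (1-t)^3) = ((Real.exp 4)⁻¹/4) * (1/3) * (1/(1-t)^3) := by
          field_simp; ring
      _ ≤ ((Real.exp 4)⁻¹/4) * (1/3) * (3 * ∑ k ∈ Finset.range (N+1), (k:ℝ)^2) := by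
          apply mul_le_mul_of_nonneg_left h15 (by positivity)
      _ = (Real.exp 4)⁻¹/4 * ∑ k ∈ Finset.range (N+1), (k:ℝ)^2 := by ring
  linarith
lemma logTaylor_three (z : ℂ) : Complex.logTaylor 3 z = z - z^2/2 := by
  simp [Complex.logTaylor_succ, Complex.logTaylor_zero]
  ring
set_option maxHeartbeats 1000000 in
lemma term_bound {a y : ℝ} (ha0 : 0 ≤ a) (ha1 : a ≤ 1/2) (hay : a * |y| ≤ 1/2) :
    ‖Complex.log (1 + (a:ℂ) * (Complex.exp ((y:ℂ) * Complex.I) - 1))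
      - (a:ℂ) * ((y:ℂ) * Complex.I) - ((y:ℂ) * Complex.I)^2/2 * ((a - a^2 : ℝ) : ℂ)‖
      ≤ 7 * a * |y|^3 := by
  set x : ℂ := (y:ℂ) * Complex.I with hxdef
  set w : ℂ := Complex.exp x - 1 with hwdef
  set z : ℂ := (a:ℂ) * w with hzdef
  have hx : ‖x‖ = |y| := by
    rw [hxdef, norm_mul, Complex.norm_real, Complex.norm_I, mul_one, Real.norm_eq_abs]
  have hw1 : ‖w‖ ≤ |y| := norm_cexp_mul_I_sub_one_le y
  have hznorm : ‖z‖ = a * ‖w‖ := by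
    rw [hzdef, norm_mul, Complex.norm_real, Real.norm_eq_abs, abs_of_nonneg ha0]
  have hzy : ‖z‖ ≤ a * |y| := by
    rw [hznorm]; exact mul_le_mul_of_nonneg_left hw1 ha0
  have hz2 : ‖z‖ ≤ 1/2 := le_trans hzy hay
  have hwnn := norm_nonneg w
  have hynn := abs_nonneg y
  -- decomposition
  have hident : Complex.log (1 + z) - (a:ℂ) * x - x^2/2 * ((a - a^2 : ℝ) : ℂ)
      = (Complex.log (1 + z) - (z - z^2/2)) + (a:ℂ) * (w - x - x^2/2)
        - ((a:ℂ)^2/2) * ((w - x) * (w + x)) := by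
    rw [hzdef]; push_cast; ring
  rw [hident]
  have htri : ‖(Complex.log (1 + z) - (z - z^2/2)) + (a:ℂ) * (w - x - x^2/2)
        - ((a:ℂ)^2/2) * ((w - x) * (w + x))‖
      ≤ ‖Complex.log (1 + z) - (z - z^2/2)‖ + ‖(a:ℂ) * (w - x - x^2/2)‖
        + ‖((a:ℂ)^2/2) * ((w - x) * (w + x))‖ := by
    calc _ ≤ ‖(Complex.log (1 + z) - (z - z^2/2)) + (a:ℂ) * (w - x - x^2/2)‖
          + ‖((a:ℂ)^2/2) * ((w - x) * (w + x))‖ := norm_sub_le _ _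
      _ ≤ _ := by gcongr; exact norm_add_le _ _
  refine le_trans htri ?_
  -- T1 bound
  have hT1 : ‖Complex.log (1 + z) - (z - z^2/2)‖ ≤ (2/3) * (a * |y|)^3 := by
    have h := Complex.norm_log_sub_logTaylor_le 2 (z := z) (by linarith)
    rw [logTaylor_three] at h
    have hinv : (1 - ‖z‖)⁻¹ ≤ 2 := by
      rw [inv_le_comm₀ (by linarith) (by norm_num)]
      linarith
    have hmn : ‖z‖^3 * (1-‖z‖)⁻¹ ≤ (a*|y|)^3 * 2 :=
      mul_le_mul (pow_le_pow_left₀ (norm_nonneg z) hzy 3) hinv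
        (inv_nonneg.2 (by linarith)) (by positivity)
    calc ‖Complex.log (1 + z) - (z - z^2/2)‖ ≤ ‖z‖^3 * (1 - ‖z‖)⁻¹ / 3 := by
          convert h using 2; norm_num
      _ ≤ ((a*|y|)^3 * 2) / 3 := by linarith
      _ = (2/3) * (a * |y|)^3 := by ring
  have hanorm : ‖((a:ℝ):ℂ)‖ = a := by
    rw [Complex.norm_real, Real.norm_eq_abs, abs_of_nonneg ha0]
  rcases le_or_gt (|y|) 1 with hy1 | hy1
  · -- |y| ≤ 1
    have hxle : ‖x‖ ≤ 1 := by rw [hx]; exact hy1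
    have hsum2 : ∑ m ∈ Finset.range 2, x ^ m / m.factorial = 1 + x := by
      simp [Finset.sum_range_succ]
    have hsum3 : ∑ m ∈ Finset.range 3, x ^ m / m.factorial = 1 + x + x^2/2 := by
      rw [Finset.sum_range_succ, Finset.sum_range_succ, Finset.sum_range_one]
      norm_num [Nat.factorial]
    have hEB2 : ‖w - x‖ ≤ 3/4 * |y|^2 := by
      have h := Complex.exp_bound hxle (n := 2) (by norm_num)
      rw [hsum2] at h
      have : Complex.exp x - (1 + x) = w - x := by rw [hwdef]; ring
      rw [this] at h
      calc ‖w - x‖ ≤ ‖x‖^2 * ((3:ℕ) * ((2:ℕ).factorial * (2:ℕ) : ℝ)⁻¹) := by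
            simpa using h
        _ = 3/4 * |y|^2 := by rw [hx]; simp [Nat.factorial]; ring
    have hEB3 : ‖w - x - x^2/2‖ ≤ 2/9 * |y|^3 := by
      have h := Complex.exp_bound hxle (n := 3) (by norm_num)
      rw [hsum3] at h
      have : Complex.exp x - (1 + x + x^2/2) = w - x - x^2/2 := by rw [hwdef]; ring
      rw [this] at h
      calc ‖w - x - x^2/2‖ ≤ ‖x‖^3 * ((4:ℕ) * ((3:ℕ).factorial * (3:ℕ) : ℝ)⁻¹) := by
            simpa using h
        _ = 2/9 * |y|^3 := by rw [hx]; simp [Nat.factorial]; ring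
    have hT2 : ‖(a:ℂ) * (w - x - x^2/2)‖ ≤ a * (2/9 * |y|^3) := by
      rw [norm_mul, hanorm]
      exact mul_le_mul_of_nonneg_left hEB3 ha0
    have hT3 : ‖((a:ℂ)^2/2) * ((w - x) * (w + x))‖ ≤ a^2/2 * ((3/4*|y|^2) * (2*|y|)) := by
      rw [norm_mul, norm_mul, norm_div, norm_pow, hanorm]
      have hwx : ‖w + x‖ ≤ 2 * |y| := by
        calc ‖w + x‖ ≤ ‖w‖ + ‖x‖ := norm_add_le _ _
          _ ≤ 2 * |y| := by rw [hx]; linarith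
      have : ‖(2:ℂ)‖ = 2 := by norm_num
      rw [this]
      apply mul_le_mul (le_refl _) ?_ (by positivity) (by positivity)
      exact mul_le_mul hEB2 hwx (norm_nonneg _) (by positivity)
    have ha3 : a^3 ≤ a := by nlinarith
    have ha2 : a^2 ≤ a := by nlinarith
    calc _ ≤ (2/3) * (a*|y|)^3 + a * (2/9 * |y|^3) + a^2/2 * ((3/4*|y|^2) * (2*|y|)) := by
          gcongr
      _ = (2/3) * a^3 * |y|^3 + (2/9) * a * |y|^3 + (3/4) * a^2 * |y|^3 := by ring
      _ ≤ (2/3) * a * |y|^3 + (2/9) * a * |y|^3 + (3/4) * a * |y|^3 := by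
          gcongr <;> positivity
      _ ≤ 7 * a * |y|^3 := by nlinarith [mul_nonneg ha0 (pow_nonneg hynn 3)]
  · -- |y| > 1
    have hy3 : |y| ≤ |y|^3 := by
      nlinarith [mul_nonneg (mul_nonneg hynn (sub_nonneg.2 hy1.le)) (add_nonneg hynn zero_le_one)]
    have hy23 : |y|^2 ≤ |y|^3 := by
      nlinarith [mul_nonneg (mul_nonneg hynn hynn) (sub_nonneg.2 hy1.le)]
    have ha2' : a^2 ≤ a/2 := by nlinarith
    have hlog := Complex.norm_log_one_add_half_le_self (z := z) hz2
    have hT1' : ‖Complex.log (1 + z) - (z - z^2/2)‖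
        ≤ (3/2) * (a*|y|) + a*|y| + (a*|y|)^2/2 := by
      have hz2' : ‖z‖^2 ≤ (a*|y|)^2 := pow_le_pow_left₀ (norm_nonneg z) hzy 2
      calc ‖Complex.log (1 + z) - (z - z^2/2)‖
          ≤ ‖Complex.log (1+z)‖ + ‖z - z^2/2‖ := norm_sub_le _ _
        _ ≤ ‖Complex.log (1+z)‖ + (‖z‖ + ‖z^2/2‖) := by gcongr; exact norm_sub_le _ _
        _ = ‖Complex.log (1+z)‖ + ‖z‖ + ‖z‖^2/2 := by
            rw [norm_div, norm_pow]
            have : ‖(2:ℂ)‖ = 2 := by norm_num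
            rw [this]; ring
        _ ≤ (3/2) * (a*|y|) + a*|y| + (a*|y|)^2/2 := by
            have h32 : (3:ℝ)/2 * ‖z‖ ≤ 3/2 * (a*|y|) := by linarith
            linarith [hlog, hzy, hz2']
    have hT2 : ‖(a:ℂ) * (w - x - x^2/2)‖ ≤ a * (|y| + |y| + |y|^2/2) := by
      rw [norm_mul, hanorm]
      apply mul_le_mul_of_nonneg_left ?_ ha0
      calc ‖w - x - x^2/2‖ ≤ ‖w - x‖ + ‖x^2/2‖ := norm_sub_le _ _
        _ ≤ (‖w‖ + ‖x‖) + ‖x^2/2‖ := by gcongr; exact norm_sub_le _ _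
        _ ≤ |y| + |y| + |y|^2/2 := by
            rw [norm_div, norm_pow, hx]
            have : ‖(2:ℂ)‖ = 2 := by norm_num
            rw [this]
            linarith [hw1]
    have hT3 : ‖((a:ℂ)^2/2) * ((w - x) * (w + x))‖ ≤ a^2/2 * ((2*|y|) * (2*|y|)) := by
      rw [norm_mul, norm_mul, norm_div, norm_pow, hanorm]
      have h1 : ‖w - x‖ ≤ 2 * |y| := by
        calc ‖w - x‖ ≤ ‖w‖ + ‖x‖ := norm_sub_le _ _
          _ ≤ 2*|y| := by rw [hx]; linarith
      have h2 : ‖w + x‖ ≤ 2 * |y| := by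
        calc ‖w + x‖ ≤ ‖w‖ + ‖x‖ := norm_add_le _ _
          _ ≤ 2*|y| := by rw [hx]; linarith
      have h2' : ‖(2:ℂ)‖ = 2 := by norm_num
      rw [h2']
      apply mul_le_mul (le_refl _) ?_ (by positivity) (by positivity)
      exact mul_le_mul h1 h2 (norm_nonneg _) (by positivity)
    calc _ ≤ ((3/2) * (a*|y|) + a*|y| + (a*|y|)^2/2) + a * (|y| + |y| + |y|^2/2)
          + a^2/2 * ((2*|y|) * (2*|y|)) := by gcongr
      _ ≤ 7 * a * |y|^3 := by
          nlinarith [mul_nonneg ha0 (sub_nonneg.2 hy3), mul_nonneg ha0 (sub_nonneg.2 hy23),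
            mul_nonneg (sub_nonneg.2 ha2') (mul_nonneg hynn hynn),
            mul_nonneg ha0 hynn, hay, mul_nonneg (mul_nonneg ha0 ha0) (mul_nonneg hynn hynn)]
set_option maxHeartbeats 1000000 in
lemma phiQ_eq {θ t : ℝ} (ht0 : 1/2 ≤ t) (ht1 : t < 1)
    (hsmall : |θ / sigmaQ t| ≤ (1-t)/2) :
    ∃ R : ℂ, ‖R‖ ≤ 1792 * |θ / sigmaQ t|^3 / (1-t)^4 ∧
      phiQ t θ = Complex.exp (-(θ:ℂ)^2/2 + R) := by
  have htpos : 0 < t := by linarith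
  have h1t : 0 < 1 - t := by linarith
  set σ := sigmaQ t with hσdef
  set u := θ / σ with hu
  have hS := S_lb ht0 ht1
  set S := ∑' k:ℕ, (k:ℝ)^2 * t^k/(1+t^k)^2 with hSdef
  have hSpos : 0 < S := lt_of_lt_of_le (by positivity) hS
  have hσS : σ = Real.sqrt S := rfl
  have hσpos : 0 < σ := by rw [hσS]; exact Real.sqrt_pos.2 hSpos
  have hσ2 : σ^2 = S := by rw [hσS]; exact Real.sq_sqrt hSpos.le
  -- basic facts about a k
  set a : ℕ → ℝ := fun k => t^k/(1+t^k) with ha_def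
  have htk : ∀ k : ℕ, 0 < t^k := fun k => pow_pos htpos k
  have htk1 : ∀ k : ℕ, t^k ≤ 1 := fun k => pow_le_one₀ htpos.le ht1.le
  have hden : ∀ k : ℕ, (0:ℝ) < 1 + t^k := fun k => by linarith [htk k]
  have ha0 : ∀ k, 0 ≤ a k := fun k => by
    simp only [ha_def]; positivity
  have ha1 : ∀ k, a k ≤ 1/2 := fun k => by
    simp only [ha_def]
    rw [div_le_iff₀ (hden k)]
    linarith [htk1 k]
  have hatk : ∀ k, a k ≤ t^k := fun k => by
    simp only [ha_def]
    rw [div_le_iff₀ (hden k)]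
    nlinarith [htk k]
  have hbk : ∀ k, a k - (a k)^2 = t^k/(1+t^k)^2 := fun k => by
    simp only [ha_def]
    field_simp
    ring
  have husmall : |u| ≤ (1-t)/2 := hsmall
  have hglob : ∀ k : ℕ, a k * |(k:ℝ)*u| ≤ 1/2 := by
    intro k
    have h1 : |(k:ℝ)*u| = (k:ℝ) * |u| := by
      rw [abs_mul, Nat.abs_cast]
    rw [h1]
    calc a k * ((k:ℝ) * |u|) ≤ t^k * ((k:ℝ) * |u|) := by
          apply mul_le_mul_of_nonneg_right (hatk k) (by positivity)
      _ = ((k:ℝ) * t^k) * |u| := by ring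
      _ ≤ (1/(1-t)) * ((1-t)/2) := by
          apply mul_le_mul (k_mul_pow_le htpos ht1 k) husmall (abs_nonneg u) (by positivity)
      _ = 1/2 := by field_simp
  -- the product factors
  set g : ℕ → ℂ := fun k =>
    (1 + (t:ℂ)^k * Complex.exp (Complex.I * (k:ℂ) * (θ:ℂ) / ((σ:ℝ):ℂ))) / (1 + (t:ℂ)^k)
    with hg_def
  have hdenC : ∀ k : ℕ, (1:ℂ) + (t:ℂ)^k ≠ 0 := by
    intro k
    have : ((1 + t^k : ℝ):ℂ) ≠ 0 := by
      rw [Complex.ofReal_ne_zero]; exact (hden k).ne'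
    simpa using this
  have hgk : ∀ k : ℕ, g k
      = 1 + ((a k : ℝ):ℂ) * (Complex.exp ((((k:ℝ)*u : ℝ):ℂ) * Complex.I) - 1) := by
    intro k
    have harg : Complex.I * (k:ℂ) * (θ:ℂ) / ((σ:ℝ):ℂ) = (((k:ℝ)*u : ℝ):ℂ) * Complex.I := by
      rw [hu]; push_cast; ring
    have hak : ((a k : ℝ):ℂ) = (t:ℂ)^k / (1 + (t:ℂ)^k) := by
      simp only [ha_def]; push_cast; ring
    simp only [hg_def]
    rw [harg, hak]
    rw [div_mul_eq_mul_div, add_div' _ _ _ (hdenC k)]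
    congr 1
    ring
  -- remainder terms
  set A : ℕ → ℂ := fun k => ((a k : ℝ):ℂ) * ((((k:ℝ)*u : ℝ):ℂ) * Complex.I) with hA_def
  set B : ℕ → ℂ := fun k =>
    ((((k:ℝ)*u : ℝ):ℂ) * Complex.I)^2/2 * ((a k - (a k)^2 : ℝ):ℂ) with hB_def
  set r : ℕ → ℂ := fun k => Complex.log (g k) - A k - B k with hr_def
  have hrb : ∀ k : ℕ, ‖r k‖ ≤ 7*|u|^3 * ((k:ℝ)^3 * t^k) := by
    intro k
    have h := term_bound (a := a k) (y := (k:ℝ)*u) (ha0 k) (ha1 k) (hglob k)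
    simp only [hr_def, hA_def, hB_def, hgk k]
    calc ‖Complex.log (1 + ((a k : ℝ):ℂ) * (Complex.exp ((((k:ℝ)*u : ℝ):ℂ) * Complex.I) - 1))
          - ((a k : ℝ):ℂ) * ((((k:ℝ)*u : ℝ):ℂ) * Complex.I)
          - ((((k:ℝ)*u : ℝ):ℂ) * Complex.I)^2/2 * ((a k - (a k)^2 : ℝ):ℂ)‖
        ≤ 7 * a k * |(k:ℝ)*u|^3 := h
      _ ≤ 7*|u|^3 * ((k:ℝ)^3 * t^k) := by
          rw [abs_mul, Nat.abs_cast]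
          calc 7 * a k * ((k:ℝ) * |u|)^3 = 7 * |u|^3 * ((k:ℝ)^3 * a k) := by ring
            _ ≤ 7*|u|^3 * ((k:ℝ)^3 * t^k) := by
                apply mul_le_mul_of_nonneg_left _ (by positivity)
                apply mul_le_mul_of_nonneg_left (hatk k) (by positivity)
  have hbound_sum : Summable (fun k : ℕ => 7*|u|^3 * ((k:ℝ)^3 * t^k)) :=
    (summable_pow_mul htpos.le ht1 3).mul_left _
  have hr_sum : Summable r := by
    apply Summable.of_norm_bounded hbound_sum hrb
  -- summabilities of A and B
  have hm_sum : Summable (fun k : ℕ => (k:ℝ) * t^k / (1 + t^k)) := by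
    apply Summable.of_nonneg_of_le (fun k => by positivity) _ (summable_pow_mul htpos.le ht1 1)
    intro k
    rw [div_le_iff₀ (hden k), pow_one]
    nlinarith [htk k, Nat.cast_nonneg (α := ℝ) k,
      mul_nonneg (mul_nonneg (Nat.cast_nonneg (α := ℝ) k) (htk k).le) (htk k).le]
  have hs_sum : Summable (fun k : ℕ => (k:ℝ)^2 * t^k / (1 + t^k)^2) := by
    apply Summable.of_nonneg_of_le (fun k => by positivity) _ (summable_pow_mul htpos.le ht1 2)
    intro k
    rw [div_le_iff₀ (by positivity : (0:ℝ) < (1+t^k)^2)]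
    have h1 : (0:ℝ) ≤ (k:ℝ)^2 * t^k := by positivity
    nlinarith [htk k, mul_nonneg h1 (htk k).le,
      mul_nonneg (mul_nonneg h1 (htk k).le) (htk k).le]
  have hA_eq : ∀ k : ℕ, A k = ((u * ((k:ℝ) * t^k / (1 + t^k)) : ℝ):ℂ) * Complex.I := by
    intro k
    simp only [hA_def, ha_def]
    push_cast
    ring
  have hB_eq : ∀ k : ℕ, B k = ((-(u^2/2) * ((k:ℝ)^2 * t^k / (1 + t^k)^2) : ℝ):ℂ) := by
    intro k
    have hI : ((((k:ℝ)*u : ℝ):ℂ) * Complex.I)^2 = -((((k:ℝ)*u : ℝ):ℂ))^2 := by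
      rw [mul_pow, Complex.I_sq]; ring
    have hreal : -(u^2/2) * ((k:ℝ)^2 * t^k / (1 + t^k)^2)
        = -(((k:ℝ)*u)^2)/2 * (a k - (a k)^2) := by
      rw [hbk k]; ring
    simp only [hB_def]
    rw [hI, hreal]
    push_cast
    ring
  have hA_sum : Summable A := by
    rw [show A = fun k : ℕ => ((u * ((k:ℝ) * t^k / (1 + t^k)) : ℝ):ℂ) * Complex.I from funext hA_eq]
    exact ((Complex.summable_ofReal.2 (hm_sum.mul_left u)).mul_right _)
  have hB_sum : Summable B := by
    rw [show B = fun k : ℕ => ((-(u^2/2) * ((k:ℝ)^2 * t^k / (1 + t^k)^2) : ℝ):ℂ) from funext hB_eq]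
    exact Complex.summable_ofReal.2 (hs_sum.mul_left _)
  have hlog_eq : ∀ k : ℕ, Complex.log (g k) = r k + (A k + B k) := by
    intro k
    simp only [hr_def]
    ring
  have hlog_sum : Summable (fun k => Complex.log (g k)) := by
    rw [show (fun k => Complex.log (g k)) = fun k => r k + (A k + B k) from funext hlog_eq]
    exact hr_sum.add (hA_sum.add hB_sum)
  -- nonvanishing
  have hg_ne : ∀ k : ℕ, g k ≠ 0 := by
    intro k
    rw [hgk k]
    intro hzero
    have h1 : ((a k : ℝ):ℂ) * (Complex.exp ((((k:ℝ)*u : ℝ):ℂ) * Complex.I) - 1) = -1 := by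
      linear_combination hzero
    have h2 : ‖((a k : ℝ):ℂ) * (Complex.exp ((((k:ℝ)*u : ℝ):ℂ) * Complex.I) - 1)‖ ≤ 1/2 := by
      rw [norm_mul, Complex.norm_real, Real.norm_eq_abs, abs_of_nonneg (ha0 k)]
      calc a k * ‖Complex.exp ((((k:ℝ)*u : ℝ):ℂ) * Complex.I) - 1‖ ≤ a k * |(k:ℝ)*u| := by
            apply mul_le_mul_of_nonneg_left (norm_cexp_mul_I_sub_one_le _) (ha0 k)
        _ ≤ 1/2 := hglob k
    rw [h1] at h2
    norm_num at h2
  -- product = exp of sum of logs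
  have hprod : ∏' k, g k = Complex.exp (∑' k, Complex.log (g k)) := by
    exact (Complex.cexp_tsum_eq_tprod hg_ne hlog_sum).symm
  -- compute tsums of A and B
  have htsumA : ∑' k, A k = ((u * meanQ t : ℝ):ℂ) * Complex.I := by
    calc ∑' k, A k = ∑' k : ℕ, ((u * ((k:ℝ) * t^k / (1 + t^k)) : ℝ):ℂ) * Complex.I :=
          tsum_congr hA_eq
      _ = (∑' k : ℕ, ((u * ((k:ℝ) * t^k / (1 + t^k)) : ℝ):ℂ)) * Complex.I := tsum_mul_right
      _ = ((∑' k : ℕ, (u * ((k:ℝ) * t^k / (1 + t^k))) : ℝ):ℂ) * Complex.I := by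
          rw [Complex.ofReal_tsum]
      _ = ((u * meanQ t : ℝ):ℂ) * Complex.I := by
          rw [tsum_mul_left]
          rfl
  have htsumB : ∑' k, B k = ((-(u^2/2) * S : ℝ):ℂ) := by
    calc ∑' k, B k = ∑' k : ℕ, ((-(u^2/2) * ((k:ℝ)^2 * t^k / (1 + t^k)^2) : ℝ):ℂ) :=
          tsum_congr hB_eq
      _ = ((∑' k : ℕ, (-(u^2/2) * ((k:ℝ)^2 * t^k / (1 + t^k)^2)) : ℝ):ℂ) := by
          rw [Complex.ofReal_tsum]
      _ = ((-(u^2/2) * S : ℝ):ℂ) := by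
          rw [tsum_mul_left]
  have hBval : -(u^2/2) * S = -(θ^2/2) := by
    rw [hu, ← hσ2]
    field_simp
  -- assemble
  refine ⟨∑' k, r k, ?_, ?_⟩
  · -- norm bound
    have hnorm_sum : Summable (fun k => ‖r k‖) :=
      Summable.of_nonneg_of_le (fun k => norm_nonneg _) hrb hbound_sum
    calc ‖∑' k, r k‖ ≤ ∑' k, ‖r k‖ := norm_tsum_le_tsum_norm hnorm_sum
      _ ≤ ∑' k : ℕ, 7*|u|^3 * ((k:ℝ)^3 * t^k) := Summable.tsum_le_tsum hrb hnorm_sum hbound_sum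
      _ = 7*|u|^3 * ∑' k : ℕ, (k:ℝ)^3 * t^k := tsum_mul_left
      _ ≤ 7*|u|^3 * (256/(1-t)^4) := by
          apply mul_le_mul_of_nonneg_left (tsum_cube_le htpos ht1) (by positivity)
      _ = 1792 * |u|^3 / (1-t)^4 := by ring
  · -- the identity
    have hsplit : ∑' k, Complex.log (g k)
        = (∑' k, r k) + (((u * meanQ t : ℝ):ℂ) * Complex.I + ((-(u^2/2) * S : ℝ):ℂ)) := by
      calc ∑' k, Complex.log (g k) = ∑' k, (r k + (A k + B k)) := tsum_congr hlog_eq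
        _ = (∑' k, r k) + ((∑' k, A k) + (∑' k, B k)) := by
            rw [Summable.tsum_add hr_sum (hA_sum.add hB_sum), Summable.tsum_add hA_sum hB_sum]
        _ = _ := by rw [htsumA, htsumB]
    have hphi : phiQ t θ
        = Complex.exp (-Complex.I * (θ:ℂ) * ((meanQ t : ℝ):ℂ) / ((σ:ℝ):ℂ))
          * ∏' k, g k := rfl
    rw [hphi, hprod, ← Complex.exp_add, hsplit]
    congr 1
    rw [hBval, hu]
    push_cast
    field_simp
    ring

/-- Pointwise convergence of the characteristic function of `Z_t` to the Gaussian one: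
for every `θ ∈ ℝ`, `φ_t(θ) → e^{−θ²/2}` as `t → 1⁻`. -/
theorem charFun_restricted_partitions_tendsto_gaussian (θ : ℝ) :
    Tendsto (fun t : ℝ => phiQ t θ) (𝓝[<] (1 : ℝ))
      (𝓝 ((Real.exp (-θ ^ 2 / 2) : ℝ) : ℂ)) := by
  set c : ℝ := 12 * Real.exp 4 with hc
  have hc0 : 0 < c := by positivity
  set K : ℝ := |θ| * Real.sqrt c with hK
  have hK0 : 0 ≤ K := by positivity
  -- sqrt(1-t) → 0
  have hsq0 : Tendsto (fun t : ℝ => Real.sqrt (1-t)) (𝓝[<] (1:ℝ)) (𝓝 0) := by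
    have h1 : Tendsto (fun t : ℝ => Real.sqrt (1-t)) (𝓝 (1:ℝ)) (𝓝 (Real.sqrt (1-1))) := by
      exact (Real.continuous_sqrt.comp (continuous_const.sub continuous_id)).tendsto 1
    simp only [sub_self, Real.sqrt_zero] at h1
    exact h1.mono_left nhdsWithin_le_nhds
  have hKs : Tendsto (fun t : ℝ => K * Real.sqrt (1-t)) (𝓝[<] (1:ℝ)) (𝓝 0) := by
    simpa using hsq0.const_mul K
  have hRs : Tendsto (fun t : ℝ => 1792 * K^3 * Real.sqrt (1-t)) (𝓝[<] (1:ℝ)) (𝓝 0) := by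
    simpa using hsq0.const_mul (1792 * K^3)
  have ev1 : ∀ᶠ t in 𝓝[<] (1:ℝ), t ∈ Set.Ioo (1/2 : ℝ) 1 :=
    Ioo_mem_nhdsLT_of_mem (by constructor <;> norm_num)
  have ev2 : ∀ᶠ t in 𝓝[<] (1:ℝ), K * Real.sqrt (1-t) < 1/2 :=
    hKs.eventually_lt_const (by norm_num)
  have ev3 : ∀ᶠ t in 𝓝[<] (1:ℝ), 1792 * K^3 * Real.sqrt (1-t) < 1 :=
    hRs.eventually_lt_const (by norm_num)
  -- the key eventual bound
  have evmain : ∀ᶠ t in 𝓝[<] (1:ℝ),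
      ‖phiQ t θ - ((Real.exp (-θ^2/2) : ℝ) : ℂ)‖ ≤ 2 * (1792 * K^3 * Real.sqrt (1-t)) := by
    filter_upwards [ev1, ev2, ev3] with t htIoo hK2 hR1
    obtain ⟨ht12, ht1⟩ := htIoo
    have h1t : 0 < 1 - t := by linarith
    set s : ℝ := Real.sqrt (1-t) with hs
    have hs0 : 0 < s := Real.sqrt_pos.2 h1t
    have hs2 : s^2 = 1 - t := Real.sq_sqrt h1t.le
    -- sigma lower bound
    have hS := S_lb ht12.le ht1
    have hSpos : 0 < ∑' k:ℕ, (k:ℝ)^2 * t^k/(1+t^k)^2 :=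
      lt_of_lt_of_le (by positivity) hS
    have hσpos : 0 < sigmaQ t := Real.sqrt_pos.2 hSpos
    have hσlb : Real.sqrt (1/(c*(1-t)^3)) ≤ sigmaQ t := Real.sqrt_le_sqrt hS
    have husb : |θ / sigmaQ t| ≤ K * ((1-t) * s) := by
      have hlb0 : 0 < Real.sqrt (1/(c*(1-t)^3)) := by
        apply Real.sqrt_pos.2; positivity
      have h2 : |θ / sigmaQ t| = |θ| / sigmaQ t := by
        rw [abs_div, abs_of_pos hσpos]
      rw [h2]
      calc |θ| / sigmaQ t ≤ |θ| / Real.sqrt (1/(c*(1-t)^3)) :=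
            div_le_div_of_nonneg_left (abs_nonneg θ) hlb0 hσlb
        _ = |θ| * Real.sqrt (c*(1-t)^3) := by
            rw [one_div, Real.sqrt_inv, div_eq_mul_inv, inv_inv]
        _ = K * ((1-t) * s) := by
            rw [hK, Real.sqrt_mul hc0.le, mul_assoc]
            congr 1
            rw [show (1-t)^3 = (1-t)^2 * (1-t) by ring,
              Real.sqrt_mul (sq_nonneg _), Real.sqrt_sq h1t.le]
    have hsmall : |θ / sigmaQ t| ≤ (1-t)/2 := by
      calc |θ / sigmaQ t| ≤ K * ((1-t) * s) := husb
        _ = (1-t) * (K * s) := by ring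
        _ ≤ (1-t) * (1/2) := by
            apply mul_le_mul_of_nonneg_left hK2.le h1t.le
        _ = (1-t)/2 := by ring
    obtain ⟨R, hRnorm, hphi⟩ := phiQ_eq ht12.le ht1 hsmall
    have hRbound : ‖R‖ ≤ 1792 * K^3 * s := by
      calc ‖R‖ ≤ 1792 * |θ / sigmaQ t|^3 / (1-t)^4 := hRnorm
        _ ≤ 1792 * (K * ((1-t) * s))^3 / (1-t)^4 := by
            apply div_le_div_of_nonneg_right ?_ (by positivity)
            apply mul_le_mul_of_nonneg_left
              (pow_le_pow_left₀ (abs_nonneg _) husb 3) (by norm_num)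
        _ = 1792 * K^3 * s := by
            rw [← hs2]
            field_simp
    -- assemble
    have hL : ((Real.exp (-θ^2/2) : ℝ) : ℂ) = Complex.exp (-(θ:ℂ)^2/2) := by
      rw [Complex.ofReal_exp]
      congr 1
      push_cast
      ring
    rw [hphi, hL, Complex.exp_add]
    have hfact : Complex.exp (-(θ:ℂ)^2/2) * Complex.exp R - Complex.exp (-(θ:ℂ)^2/2)
        = Complex.exp (-(θ:ℂ)^2/2) * (Complex.exp R - 1) := by ring
    rw [hfact, norm_mul]
    have hnL : ‖Complex.exp (-(θ:ℂ)^2/2)‖ ≤ 1 := by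
      rw [Complex.norm_exp]
      apply Real.exp_le_one_iff.2
      have hre : (-(θ:ℂ)^2/2) = ((-θ^2/2 : ℝ):ℂ) := by push_cast; ring
      rw [hre, Complex.ofReal_re]
      nlinarith [sq_nonneg θ]
    have hR1' : ‖R‖ ≤ 1 := le_trans hRbound hR1.le
    have hexpR : ‖Complex.exp R - 1‖ ≤ 2 * ‖R‖ := by
      exact Complex.norm_exp_sub_one_le hR1'
    calc ‖Complex.exp (-(θ:ℂ)^2/2)‖ * ‖Complex.exp R - 1‖
        ≤ 1 * (2 * ‖R‖) := by
          apply mul_le_mul hnL hexpR (norm_nonneg _) (by norm_num)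
      _ = 2 * ‖R‖ := by ring
      _ ≤ 2 * (1792 * K^3 * s) := by linarith
  -- conclude
  rw [tendsto_iff_norm_sub_tendsto_zero]
  apply squeeze_zero' (Eventually.of_forall (fun t => norm_nonneg _)) evmain
  simpa using hRs.const_mul 2
end

section
/- As ρ → 0⁺, one has ∑_{k=1}^{∞} ln(1 + e^{−ρ k}) = π²/(12 ρ) − (1/2) ln 2 + O(ρ). -/
open Filter Topology Real MeasureTheory Set intervalIntegral



noncomputable def fρ (ρ x : ℝ) : ℝ := Real.log (1 + Real.exp (-ρ * x))

lemma one_add_exp_pos (t : ℝ) : (0:ℝ) < 1 + Real.exp t := by positivity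

lemma fρ_nonneg (ρ x : ℝ) : 0 ≤ fρ ρ x := by
  unfold fρ
  have := Real.exp_pos (-ρ * x)
  have : (1:ℝ) ≤ 1 + Real.exp (-ρ * x) := by linarith
  exact Real.log_nonneg this

lemma fρ_le_exp (ρ x : ℝ) : fρ ρ x ≤ Real.exp (-ρ * x) := by
  unfold fρ
  have h := Real.log_le_sub_one_of_pos (one_add_exp_pos (-ρ * x))
  linarith

lemma fρ_cont (ρ : ℝ) : Continuous (fρ ρ) := by
  unfold fρ
  have h : ∀ x : ℝ, (1 + Real.exp (-ρ * x)) ≠ 0 := fun x => (one_add_exp_pos _).ne'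
  fun_prop (disch := exact fun x => (one_add_exp_pos _).ne')

lemma fρ_integrableOn {ρ : ℝ} (hρ : 0 < ρ) (a : ℝ) : IntegrableOn (fρ ρ) (Ioi a) := by
  refine Integrable.mono (exp_neg_integrableOn_Ioi a hρ) ((fρ_cont ρ).aestronglyMeasurable) ?_
  filter_upwards with x
  rw [Real.norm_eq_abs, Real.norm_eq_abs, abs_of_nonneg (fρ_nonneg ρ x),
    abs_of_nonneg (Real.exp_pos _).le]
  exact fρ_le_exp ρ x


lemma integral_exp_neg_mul_Ioi_zero {c : ℝ} (hc : 0 < c) :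
    ∫ x in Ioi (0:ℝ), Real.exp (-c*x) = 1/c := by
  have h := integral_comp_mul_left_Ioi (fun u => Real.exp (-u)) 0 hc
  simp only [mul_zero, integral_exp_neg_Ioi_zero, smul_eq_mul, mul_one] at h
  simp only [neg_mul] at *
  rw [h, one_div]

lemma hasSum_inv_sq_succ : HasSum (fun n : ℕ => 1/((n:ℝ)+1)^2) (π^2/6) := by
  have h : HasSum (fun n : ℕ => 1/(((n+1:ℕ)):ℝ)^2) (π^2/6) := by
    rw [hasSum_nat_add_iff (f := fun n : ℕ => 1/((n:ℝ))^2) 1]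
    simpa using hasSum_zeta_two
  simpa using h

lemma integral_log_one_add_exp_neg :
    ∫ u in Ioi (0:ℝ), Real.log (1 + Real.exp (-u)) = π^2/12 := by
  set F : ℕ → ℝ → ℝ := fun n u =>
    (Real.exp (-((n:ℝ)+1)*u) - Real.exp (-(2*((n:ℝ)+1))*u))/((n:ℝ)+1) with hF
  have hc : ∀ n : ℕ, (0:ℝ) < (n:ℝ)+1 := fun n => by positivity
  have hc2 : ∀ n : ℕ, (0:ℝ) < 2*((n:ℝ)+1) := fun n => by positivity
  have hFint : ∀ n : ℕ, IntegrableOn (F n) (Ioi (0:ℝ)) := fun n =>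
    ((exp_neg_integrableOn_Ioi 0 (hc n)).sub (exp_neg_integrableOn_Ioi 0 (hc2 n))).div_const _
  have hFnonneg : ∀ n : ℕ, ∀ x ∈ Ioi (0:ℝ), 0 ≤ F n x := by
    intro n x hx
    have hxx : -(2*((n:ℝ)+1))*x ≤ -((n:ℝ)+1)*x := by nlinarith [hc n, mem_Ioi.1 hx]
    have h2 := Real.exp_le_exp.2 hxx
    have h3 := hc n
    apply div_nonneg (by linarith) h3.le
  have hFval : ∀ n : ℕ, ∫ x in Ioi (0:ℝ), F n x = 1/(2*((n:ℝ)+1)^2) := by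
    intro n
    unfold F
    rw [MeasureTheory.integral_div,
      MeasureTheory.integral_sub (exp_neg_integrableOn_Ioi 0 (hc n))
        (exp_neg_integrableOn_Ioi 0 (hc2 n)),
      integral_exp_neg_mul_Ioi_zero (hc n), integral_exp_neg_mul_Ioi_zero (hc2 n)]
    field_simp
    ring
  have hnorm : ∀ n : ℕ, ∫ x in Ioi (0:ℝ), ‖F n x‖ = 1/(2*((n:ℝ)+1)^2) := by
    intro n
    rw [← hFval n]
    apply setIntegral_congr_fun measurableSet_Ioi
    intro x hx
    exact Real.norm_of_nonneg (hFnonneg n x hx)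
  have hsum : Summable (fun n : ℕ => ∫ x in Ioi (0:ℝ), ‖F n x‖) := by
    simp_rw [hnorm]
    exact (hasSum_inv_sq_succ.div_const 2).summable.congr (fun n => by field_simp)
  have key := integral_tsum_of_summable_integral_norm (F := F)
    (μ := volume.restrict (Ioi (0:ℝ))) hFint hsum
  have hpt : ∀ u ∈ Ioi (0:ℝ), ∑' n, F n u = Real.log (1 + Real.exp (-u)) := by
    intro u hu
    have hu' : (0:ℝ) < u := hu
    set x := Real.exp (-u) with hx
    have hx0 : 0 < x := Real.exp_pos _
    have hx1 : x < 1 := Real.exp_lt_one_iff.2 (by linarith)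
    have habs : |x| < 1 := by rw [abs_of_pos hx0]; exact hx1
    have habs2 : |x^2| < 1 := by rw [abs_of_pos (by positivity)]; nlinarith
    have h1 := hasSum_pow_div_log_of_abs_lt_one habs
    have h2 := hasSum_pow_div_log_of_abs_lt_one habs2
    have h3 := h1.sub h2
    have hval : -Real.log (1-x) - -Real.log (1-x^2) = Real.log (1+x) := by
      have hfac : 1 - x^2 = (1-x)*(1+x) := by ring
      rw [hfac, Real.log_mul (by linarith) (by linarith)]
      ring
    rw [hval] at h3
    have hterm : ∀ n : ℕ, x^(n+1)/((n:ℝ)+1) - (x^2)^(n+1)/((n:ℝ)+1) = F n u := by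
      intro n
      unfold F
      rw [hx, ← Real.exp_nat_mul, ← pow_mul, ← Real.exp_nat_mul]
      push_cast
      rw [div_sub_div_same]
      congr 3 <;> ring
    have h4 : HasSum (fun n => F n u) (Real.log (1+x)) :=
      h3.congr_fun (fun n => (hterm n).symm)
    exact h4.tsum_eq
  calc ∫ u in Ioi (0:ℝ), Real.log (1 + Real.exp (-u))
      = ∫ u in Ioi (0:ℝ), ∑' n, F n u :=
        setIntegral_congr_fun measurableSet_Ioi (fun u hu => (hpt u hu).symm)
    _ = ∑' n, ∫ u in Ioi (0:ℝ), F n u := key.symm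
    _ = ∑' n : ℕ, 1/(2*((n:ℝ)+1)^2) := tsum_congr hFval
    _ = π^2/12 := by
        have h5 := (hasSum_inv_sq_succ.div_const 2).tsum_eq
        have h6 : ∀ n : ℕ, 1/(2*((n:ℝ)+1)^2) = (1/((n:ℝ)+1)^2)/2 := fun n => by rw [div_div, mul_comm]
        rw [tsum_congr h6, h5]
        ring


lemma integral_fρ {ρ : ℝ} (hρ : 0 < ρ) :
    ∫ x in Ioi (0:ℝ), fρ ρ x = π^2/(12*ρ) := by
  have h := integral_comp_mul_left_Ioi (fun u => Real.log (1 + Real.exp (-u))) 0 hρ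
  simp only [mul_zero, smul_eq_mul] at h
  rw [integral_log_one_add_exp_neg] at h
  unfold fρ
  simp only [neg_mul]
  rw [h]
  field_simp

lemma cell_pointwise {ρ c s : ℝ} (hρ : 0 < ρ) (hs : 0 ≤ s) (hs2 : s ≤ 1/2) :
    0 ≤ fρ ρ (c+s) + fρ ρ (c-s) - 2 * fρ ρ c ∧
    fρ ρ (c+s) + fρ ρ (c-s) - 2 * fρ ρ c
      ≤ ρ^2*s^2*Real.exp (ρ/2)*Real.exp (-ρ*c) := by
  set u := Real.exp (-ρ*c) with hu
  set w := Real.exp (ρ*s) with hw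
  have hu0 : 0 < u := Real.exp_pos _
  have hw0 : 0 < w := Real.exp_pos _
  have hw1 : 1 ≤ w := by
    rw [hw, ← Real.exp_zero]
    exact Real.exp_le_exp.2 (by positivity)
  have hwinv : w * w⁻¹ = 1 := mul_inv_cancel₀ hw0.ne'
  have hwle : w ≤ Real.exp (ρ/2) := by
    rw [hw]
    exact Real.exp_le_exp.2 (by nlinarith)
  have hb1 : w - 1 ≤ (ρ*s)*w := by
    have h := Real.add_one_le_exp (-(ρ*s))
    have hinv : Real.exp (-(ρ*s)) = w⁻¹ := by rw [hw, ← Real.exp_neg]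
    rw [hinv] at h
    nlinarith
  have e1 : Real.exp (-ρ*(c+s)) = u * w⁻¹ := by
    rw [hu, hw, ← Real.exp_neg, ← Real.exp_add]; ring_nf
  have e2 : Real.exp (-ρ*(c-s)) = u * w := by
    rw [hu, hw, ← Real.exp_add]; ring_nf
  clear_value u w
  have hP1 : 0 < 1 + u * w⁻¹ := by positivity
  have hP2 : 0 < 1 + u * w := by positivity
  have hQ : 0 < (1+u)^2 := by positivity
  have hfadd : fρ ρ (c+s) + fρ ρ (c-s) = Real.log ((1 + u * w⁻¹) * (1 + u * w)) := by
    unfold fρ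
    rw [e1, e2, Real.log_mul hP1.ne' hP2.ne']
  have hfc : 2 * fρ ρ c = Real.log ((1+u)^2) := by
    unfold fρ
    rw [Real.log_pow, hu]
    push_cast
    ring_nf
  have hP : (1 + u * w⁻¹) * (1 + u * w) = (1+u)^2 + u*(w + w⁻¹ - 2) := by
    field_simp
    ring
  have hkey0 : 0 ≤ w + w⁻¹ - 2 := by
    have h := sq_nonneg (w - 1)
    have : w * (w + w⁻¹ - 2) = (w-1)^2 := by
      field_simp; ring
    nlinarith
  constructor
  · rw [hfadd, hfc]
    have : (1+u)^2 ≤ (1 + u * w⁻¹) * (1 + u * w) := by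
      rw [hP]; nlinarith
    have := Real.log_le_log hQ this
    linarith
  · rw [hfadd, hfc]
    have hlog : Real.log ((1 + u * w⁻¹) * (1 + u * w)) - Real.log ((1+u)^2)
        ≤ ((1 + u * w⁻¹) * (1 + u * w)) / ((1+u)^2) - 1 := by
      rw [← Real.log_div (by positivity) hQ.ne']
      exact Real.log_le_sub_one_of_pos (by positivity)
    have hA : 0 ≤ u*(w + w⁻¹ - 2) := mul_nonneg hu0.le hkey0
    have hdiv : ((1 + u * w⁻¹) * (1 + u * w)) / ((1+u)^2) - 1 ≤ u*(w + w⁻¹ - 2) := by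
      have hQ1 : 1 ≤ (1+u)^2 := by nlinarith
      rw [hP, div_sub_one hQ.ne', div_le_iff₀ hQ]
      nlinarith [mul_nonneg hA (sub_nonneg.2 hQ1)]
    have hb2 : w + w⁻¹ - 2 ≤ (ρ*s)^2 * w := by
      have hsq : w * (w + w⁻¹ - 2) = (w-1)^2 := by field_simp; ring
      have h0 : 0 ≤ w - 1 := by linarith
      have h2 : w*(w+w⁻¹-2) ≤ w*((ρ*s)^2*w) := by
        rw [hsq]
        have h3 := mul_self_le_mul_self h0 hb1
        calc (w-1)^2 = (w-1)*(w-1) := pow_two _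
          _ ≤ (ρ*s*w)*(ρ*s*w) := h3
          _ = w*((ρ*s)^2*w) := by ring
      exact (mul_le_mul_iff_right₀ hw0).1 h2
    have hfin : u*(w + w⁻¹ - 2) ≤ ρ^2*s^2*Real.exp (ρ/2)*u := by
      have h1 : w + w⁻¹ - 2 ≤ (ρ*s)^2 * Real.exp (ρ/2) := by
        have h4 : (ρ*s)^2 * w ≤ (ρ*s)^2 * Real.exp (ρ/2) :=
          mul_le_mul_of_nonneg_left hwle (sq_nonneg _)
        linarith
      calc u*(w + w⁻¹ - 2) ≤ u * ((ρ*s)^2 * Real.exp (ρ/2)) :=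
            mul_le_mul_of_nonneg_left h1 hu0.le
        _ = ρ^2*s^2*Real.exp (ρ/2)*u := by ring
    calc Real.log ((1 + u * w⁻¹) * (1 + u * w)) - Real.log ((1+u)^2)
        ≤ u*(w + w⁻¹ - 2) := le_trans hlog hdiv
      _ ≤ ρ^2*s^2*Real.exp (ρ/2)*u := hfin


lemma cell_est {ρ : ℝ} (hρ : 0 < ρ) (c : ℝ) :
    0 ≤ (∫ x in (c-1/2)..(c+1/2), fρ ρ x) - fρ ρ c ∧
    (∫ x in (c-1/2)..(c+1/2), fρ ρ x) - fρ ρ c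
      ≤ ρ^2/24 * Real.exp (ρ/2) * Real.exp (-ρ*c) := by
  have hcont := fρ_cont ρ
  have g1 : Continuous (fun s : ℝ => fρ ρ (c+s)) := hcont.comp (by continuity)
  have g2 : Continuous (fun s : ℝ => fρ ρ (c-s)) := hcont.comp (by continuity)
  have h2 : (∫ s in (0:ℝ)..(1/2), fρ ρ (c+s)) = ∫ x in c..(c+1/2), fρ ρ x := by
    rw [intervalIntegral.integral_comp_add_left (fρ ρ) c]
    norm_num
  have h3 : (∫ s in (0:ℝ)..(1/2), fρ ρ (c-s)) = ∫ x in (c-1/2)..c, fρ ρ x := by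
    rw [intervalIntegral.integral_comp_sub_left (fρ ρ) c]
    norm_num
  have hsplit : (∫ x in (c-1/2)..(c+1/2), fρ ρ x)
      = (∫ x in (c-1/2)..c, fρ ρ x) + ∫ x in c..(c+1/2), fρ ρ x :=
    (intervalIntegral.integral_add_adjacent_intervals
      (hcont.intervalIntegrable _ _) (hcont.intervalIntegrable _ _)).symm
  have hgcont : Continuous (fun s : ℝ => fρ ρ (c+s) + fρ ρ (c-s) - 2 * fρ ρ c) := by
    continuity
  have hdiff : (∫ x in (c-1/2)..(c+1/2), fρ ρ x) - fρ ρ c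
      = ∫ s in (0:ℝ)..(1/2), (fρ ρ (c+s) + fρ ρ (c-s) - 2 * fρ ρ c) := by
    rw [intervalIntegral.integral_sub (f := fun s => fρ ρ (c+s) + fρ ρ (c-s)) (g := fun _ => 2 * fρ ρ c) ((g1.add g2).intervalIntegrable _ _)
      (continuous_const.intervalIntegrable _ _),
      intervalIntegral.integral_add (g1.intervalIntegrable _ _) (g2.intervalIntegrable _ _),
      intervalIntegral.integral_const, h2, h3, hsplit]
    simp
    ring
  constructor
  · rw [hdiff]
    apply intervalIntegral.integral_nonneg (by norm_num)
    intro s hs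
    exact (cell_pointwise hρ hs.1 hs.2).1
  · rw [hdiff]
    have hmono : (∫ s in (0:ℝ)..(1/2), (fρ ρ (c+s) + fρ ρ (c-s) - 2 * fρ ρ c))
        ≤ ∫ s in (0:ℝ)..(1/2), (ρ^2*Real.exp (ρ/2)*Real.exp (-ρ*c)) * s^2 :=
      intervalIntegral.integral_mono_on (by norm_num : (0:ℝ) ≤ 1/2)
      (hgcont.intervalIntegrable _ _)
      ((continuous_const.mul (continuous_pow 2)).intervalIntegrable _ _)
      (fun s hs => le_trans (cell_pointwise hρ hs.1 hs.2).2
        (le_of_eq (by ring : ρ^2*s^2*Real.exp (ρ/2)*Real.exp (-ρ*c)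
          = (ρ^2*Real.exp (ρ/2)*Real.exp (-ρ*c)) * s^2)))
    calc (∫ s in (0:ℝ)..(1/2), (fρ ρ (c+s) + fρ ρ (c-s) - 2 * fρ ρ c))
        ≤ ∫ s in (0:ℝ)..(1/2), (ρ^2*Real.exp (ρ/2)*Real.exp (-ρ*c)) * s^2 := hmono
      _ = (ρ^2*Real.exp (ρ/2)*Real.exp (-ρ*c)) * ∫ s in (0:ℝ)..(1/2), s^2 :=
          intervalIntegral.integral_const_mul _ _
      _ = ρ^2/24 * Real.exp (ρ/2) * Real.exp (-ρ*c) := by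
          rw [integral_pow]
          norm_num
          ring


/-- As `ρ → 0⁺`, `∑_{k≥1} ln(1 + e^{−ρk}) = π²/(12ρ) − (1/2) ln 2 + O(ρ)`. -/
theorem sum_log_one_add_exp_asymptotic :
    ∃ C > (0 : ℝ), ∃ ρ₀ > (0 : ℝ), ∀ ρ ∈ Set.Ioo (0 : ℝ) ρ₀,
      |(∑' k : ℕ, Real.log (1 + Real.exp (-ρ * (k + 1)))) -
          (π ^ 2 / (12 * ρ) - (1 / 2) * Real.log 2)| ≤ C * ρ := by
  refine ⟨1, one_pos, 1, one_pos, ?_⟩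
  rintro ρ ⟨hρ, hρ1⟩
  set r := Real.exp (-ρ) with hrdef
  have hr0 : 0 < r := Real.exp_pos _
  have hr1 : r < 1 := Real.exp_lt_one_iff.2 (by linarith)
  -- bound fρ at naturals by geometric
  have hgeo : ∀ k : ℕ, fρ ρ ((k:ℝ)+1) ≤ r^(k+1) := by
    intro k
    have h1 := fρ_le_exp ρ ((k:ℝ)+1)
    have h2 : Real.exp (-ρ * ((k:ℝ)+1)) = r^(k+1) := by
      rw [hrdef, ← Real.exp_nat_mul]
      push_cast
      ring_nf
    linarith
  have hgs : Summable (fun k : ℕ => r^(k+1)) :=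
    ((summable_geometric_of_lt_one hr0.le hr1).mul_left r).congr
      (fun k => by rw [pow_succ]; ring)
  have hS : Summable (fun k : ℕ => fρ ρ ((k:ℝ)+1)) :=
    Summable.of_nonneg_of_le (fun k => fρ_nonneg ρ _) hgeo hgs
  set S := ∑' k : ℕ, fρ ρ ((k:ℝ)+1) with hSdef
  have hT : Tendsto (fun N => ∑ k ∈ Finset.range N, fρ ρ ((k:ℝ)+1)) atTop (𝓝 S) :=
    hS.hasSum.tendsto_sum_nat
  -- adjacent intervals
  have hadj : ∀ N : ℕ, ∑ k ∈ Finset.range N,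
      (∫ x in (((k:ℝ)+1)-1/2)..(((k:ℝ)+1)+1/2), fρ ρ x)
      = ∫ x in (1/2 : ℝ)..((N:ℝ)+1/2), fρ ρ x := by
    intro N
    have h := intervalIntegral.sum_integral_adjacent_intervals
      (a := fun k : ℕ => (k:ℝ)+1/2) (n := N) (μ := volume)
      (fun k _ => ((fρ_cont ρ).intervalIntegrable _ _))
    rw [show ((0:ℕ):ℝ) + 1/2 = 1/2 by norm_num] at h
    rw [← h]
    apply Finset.sum_congr rfl
    intro k _
    congr 1 <;> push_cast <;> ring
  have hIlim : Tendsto (fun N : ℕ => ∫ x in (1/2:ℝ)..((N:ℝ)+1/2), fρ ρ x) atTop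
      (𝓝 (∫ x in Ioi (1/2:ℝ), fρ ρ x)) :=
    intervalIntegral_tendsto_integral_Ioi _ (fρ_integrableOn hρ _)
      (tendsto_atTop_add_const_right _ _ tendsto_natCast_atTop_atTop)
  -- error bounds per partial sum
  have hbound : ∀ N : ℕ,
      0 ≤ (∫ x in (1/2:ℝ)..((N:ℝ)+1/2), fρ ρ x) - ∑ k ∈ Finset.range N, fρ ρ ((k:ℝ)+1) ∧
      (∫ x in (1/2:ℝ)..((N:ℝ)+1/2), fρ ρ x) - ∑ k ∈ Finset.range N, fρ ρ ((k:ℝ)+1) ≤ ρ/8 := by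
    intro N
    rw [← hadj N, ← Finset.sum_sub_distrib]
    constructor
    · apply Finset.sum_nonneg
      intro k _
      exact (cell_est hρ ((k:ℝ)+1)).1
    · have hterm : ∀ k ∈ Finset.range N,
          (∫ x in (((k:ℝ)+1)-1/2)..(((k:ℝ)+1)+1/2), fρ ρ x) - fρ ρ ((k:ℝ)+1)
          ≤ (ρ^2/24 * Real.exp (ρ/2) * r) * r^k := by
        intro k _
        refine le_trans (cell_est hρ ((k:ℝ)+1)).2 (le_of_eq ?_)
        have hx : Real.exp (-ρ) * Real.exp (-ρ)^k = Real.exp (-ρ*((k:ℝ)+1)) := by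
          rw [← Real.exp_nat_mul, ← Real.exp_add]
          congr 1
          push_cast
          ring
        rw [hrdef, ← hx]
        ring
      refine le_trans (Finset.sum_le_sum hterm) ?_
      rw [← Finset.mul_sum]
      have hgsum : ∑ k ∈ Finset.range N, r^k ≤ 1/(1-r) := by
        refine le_trans (Summable.sum_le_tsum _ (fun k _ => by positivity)
          (summable_geometric_of_lt_one hr0.le hr1)) ?_
        rw [tsum_geometric_of_lt_one hr0.le hr1]
        rw [one_div]
      -- key numeric: exp(ρ/2)*r ≤ 1 and 1-r ≥ ρ/exp 1, exp 1 ≤ 3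
      have h1r : ρ / Real.exp 1 ≤ 1 - r := by
        have he : Real.exp ρ ≤ Real.exp 1 := Real.exp_le_exp.2 hρ1.le
        have hh := Real.add_one_le_exp ρ
        have hrr : r * Real.exp ρ = 1 := by
          rw [hrdef, ← Real.exp_add]; simp
        rw [div_le_iff₀ (Real.exp_pos 1)]
        nlinarith [Real.exp_pos ρ, Real.exp_pos 1]
      have her : Real.exp (ρ/2) * r ≤ 1 := by
        rw [hrdef, ← Real.exp_add, ← Real.exp_zero]
        exact Real.exp_le_exp.2 (by linarith)
      have h1rpos : 0 < 1 - r := by linarith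
      have hfrac : 1/(1-r) ≤ Real.exp 1 / ρ := by
        rw [div_le_div_iff₀ h1rpos hρ]
        rw [div_le_iff₀ (Real.exp_pos 1)] at h1r
        nlinarith
      have hexp3 : Real.exp 1 ≤ 3 := by
        have := Real.exp_one_lt_d9
        linarith
      calc ρ^2/24 * Real.exp (ρ/2) * r * ∑ k ∈ Finset.range N, r^k
          ≤ ρ^2/24 * Real.exp (ρ/2) * r * (1/(1-r)) := by
            apply mul_le_mul_of_nonneg_left hgsum
            positivity
        _ ≤ ρ^2/24 * 1 * (Real.exp 1/ρ) := by
            have hx : Real.exp (ρ/2) * r * (1/(1-r)) ≤ 1 * (Real.exp 1/ρ) := by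
              apply mul_le_mul her hfrac (by positivity) one_pos.le
            calc ρ^2/24 * Real.exp (ρ/2) * r * (1/(1-r))
                = ρ^2/24 * (Real.exp (ρ/2) * r * (1/(1-r))) := by ring
              _ ≤ ρ^2/24 * (1 * (Real.exp 1/ρ)) := by
                  apply mul_le_mul_of_nonneg_left hx (by positivity)
              _ = ρ^2/24 * 1 * (Real.exp 1/ρ) := by ring
        _ ≤ ρ/8 := by
            rw [mul_one]
            have hq : ρ^2/24 * (Real.exp 1/ρ) = ρ * (Real.exp 1/24) := by
              field_simp
            rw [hq]
            nlinarith
  -- limit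
  have hE : 0 ≤ (∫ x in Ioi (1/2:ℝ), fρ ρ x) - S ∧
      (∫ x in Ioi (1/2:ℝ), fρ ρ x) - S ≤ ρ/8 := by
    have hlim : Tendsto (fun N : ℕ => (∫ x in (1/2:ℝ)..((N:ℝ)+1/2), fρ ρ x)
        - ∑ k ∈ Finset.range N, fρ ρ ((k:ℝ)+1)) atTop
        (𝓝 ((∫ x in Ioi (1/2:ℝ), fρ ρ x) - S)) := hIlim.sub hT
    exact ⟨ge_of_tendsto' hlim (fun N => (hbound N).1),
      le_of_tendsto' hlim (fun N => (hbound N).2)⟩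
  -- split the integral over (0,∞)
  have hsplit : ∫ x in Ioi (0:ℝ), fρ ρ x
      = (∫ x in Ioc (0:ℝ) (1/2), fρ ρ x) + ∫ x in Ioi (1/2:ℝ), fρ ρ x := by
    rw [← setIntegral_union (Ioc_disjoint_Ioi le_rfl) measurableSet_Ioi
      ((fρ_integrableOn hρ 0).mono_set Ioc_subset_Ioi_self)
      (fρ_integrableOn hρ (1/2)),
      Ioc_union_Ioi_eq_Ioi (by norm_num : (0:ℝ) ≤ 1/2)]
  have hJint : ∫ x in Ioc (0:ℝ) (1/2), fρ ρ x = ∫ x in (0:ℝ)..(1/2), fρ ρ x :=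
    (intervalIntegral.integral_of_le (by norm_num)).symm
  -- upper bound for the small piece
  have hJub : ∫ x in (0:ℝ)..(1/2), fρ ρ x ≤ 1/2 * Real.log 2 := by
    have hmono : (∫ x in (0:ℝ)..(1/2), fρ ρ x) ≤ ∫ _x in (0:ℝ)..(1/2), Real.log 2 :=
      intervalIntegral.integral_mono_on (μ := volume) (by norm_num : (0:ℝ) ≤ 1/2)
        ((fρ_cont ρ).intervalIntegrable _ _) (continuous_const.intervalIntegrable _ _)
        (fun x hx => by
          unfold fρ
          have h1 : Real.exp (-ρ*x) ≤ 1 :=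
            Real.exp_le_one_iff.2 (by nlinarith [hx.1])
          have := Real.log_le_log (one_add_exp_pos (-ρ*x)) (by linarith : 1 + Real.exp (-ρ*x) ≤ 2)
          exact this)
    rw [intervalIntegral.integral_const] at hmono
    simpa using hmono
  -- lower bound for the small piece
  have hJlb : 1/2 * Real.log 2 - ρ/16 ≤ ∫ x in (0:ℝ)..(1/2), fρ ρ x := by
    have hptw : ∀ x ∈ Icc (0:ℝ) (1/2), Real.log 2 - ρ/2 * x ≤ fρ ρ x := by
      intro x hx
      unfold fρ
      set y := Real.exp (-(ρ*x)/2) with hy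
      have hy0 : 0 < y := Real.exp_pos _
      have hysq : y^2 = Real.exp (-ρ*x) := by
        rw [hy, ← Real.exp_nat_mul]
        congr 1
        push_cast
        ring
      have h2y : 2*y ≤ 1 + Real.exp (-ρ*x) := by
        rw [← hysq]; nlinarith [sq_nonneg (1-y)]
      have hlog := Real.log_le_log (by positivity : (0:ℝ) < 2*y) h2y
      rw [Real.log_mul (by norm_num) hy0.ne', hy, Real.log_exp] at hlog
      linarith
    have hmono : (∫ x in (0:ℝ)..(1/2), (Real.log 2 - ρ/2 * x))
        ≤ ∫ x in (0:ℝ)..(1/2), fρ ρ x :=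
      intervalIntegral.integral_mono_on (μ := volume) (by norm_num : (0:ℝ) ≤ 1/2)
        ((continuous_const.sub (continuous_const.mul continuous_id)).intervalIntegrable _ _)
        ((fρ_cont ρ).intervalIntegrable _ _) hptw
    have hval : (∫ x in (0:ℝ)..(1/2), (Real.log 2 - ρ/2 * x))
        = 1/2 * Real.log 2 - ρ/16 := by
      rw [intervalIntegral.integral_sub (continuous_const.intervalIntegrable _ _)
        (Continuous.intervalIntegrable (by fun_prop : Continuous fun x : ℝ => ρ/2 * x) _ _),
        intervalIntegral.integral_const,
        intervalIntegral.integral_const_mul]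
      have : (∫ x in (0:ℝ)..(1/2), x) = ((1/2:ℝ)^2 - 0^2)/2 := integral_id
      rw [this]
      norm_num
      ring
    linarith [hval ▸ hmono]
  have hIρ := integral_fρ hρ
  have hgoalS : (∑' k : ℕ, Real.log (1 + Real.exp (-ρ * ((k:ℕ) + 1)))) = S := rfl
  rw [hgoalS, one_mul]
  rw [abs_le]
  constructor <;> [nlinarith [hE.1, hE.2, hJub, hJlb]; nlinarith [hE.1, hE.2, hJub, hJlb]]
end
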